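/- If G and H are matchings in a (simple) graph with |H| = |G| + q for some q ≥ 0, then the union H ∪ G contains at least q pairwise vertex-disjoint augmenting G-alternating paths. Formally: there exist q paths in the graph whose edge sets lie in H ∪ G, which are pairwise vertex-disjoint, and each of which is an augmenting G-alternating path. -/

import Mathlib

/-- The (undirected) edges of a path given as a list of vertices. -/
def sym2Edges {V : Type*} (l : List V) : List (Sym2 V) :=
  (l.zip l.tail).map (fun e => s(e.1, e.2))

/-- A matching in a simple graph `Γ`: a set of edges of `Γ` no two of which share a vertex. -/
def IsGraphMatching {V : Type*} (Γ : SimpleGraph V) (M : Finset (Sym2 V)) : Prop :=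
  (∀ e ∈ M, e ∈ Γ.edgeSet) ∧ ∀ e ∈ M, ∀ f ∈ M, e ≠ f → ∀ v : V, v ∈ e → v ∉ f

/-- A path (list of vertices) is `F`-alternating if of every two consecutive edges exactly
one belongs to `F`. -/
def IsAlternating {V : Type*} (F : Finset (Sym2 V)) (l : List V) : Prop :=
  (sym2Edges l).Chain' (fun e₁ e₂ => (e₁ ∈ F ↔ e₂ ∉ F))

/-- An `F`-alternating path is augmenting if it has at least one edge and its first and last
vertices belong to no edge of `F`. -/
def IsAugmenting {V : Type*} (F : Finset (Sym2 V)) (l : List V) : Prop :=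
  2 ≤ l.length ∧ IsAlternating F l ∧
    (∀ v, l.head? = some v → ∀ e ∈ F, v ∉ e) ∧
    (∀ v, l.getLast? = some v → ∀ e ∈ F, v ∉ e)

namespace Aux
variable {V : Type*}

@[simp] lemma sym2Edges_nil : sym2Edges ([] : List V) = [] := rfl
@[simp] lemma sym2Edges_single (a : V) : sym2Edges [a] = [] := rfl
@[simp] lemma sym2Edges_cons₂ (a b : V) (t : List V) :
    sym2Edges (a :: b :: t) = s(a, b) :: sym2Edges (b :: t) := rfl

lemma mem_of_mem_sym2Edges {l : List V} {e : Sym2 V} (he : e ∈ sym2Edges l) {v : V}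
    (hv : v ∈ e) : v ∈ l := by
  induction l with
  | nil => simp at he
  | cons a t ih =>
    match t with
    | [] => simp at he
    | b :: t =>
      rw [sym2Edges_cons₂] at he
      rcases List.mem_cons.1 he with h | h
      · subst h
        rcases Sym2.mem_iff.1 hv with h | h <;> subst h <;> simp
      · exact List.mem_cons_of_mem _ (ih h)

lemma sym2Edges_append (l₁ : List V) (b : V) (l₂ : List V) :
    sym2Edges (l₁ ++ b :: l₂) = sym2Edges (l₁ ++ [b]) ++ sym2Edges (b :: l₂) := by
  induction l₁ with
  | nil => simp
  | cons a t ih =>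
    match t with
    | [] => simp
    | c :: t => simpa using ih

lemma sym2Edges_reverse (l : List V) : sym2Edges l.reverse = (sym2Edges l).reverse := by
  induction l with
  | nil => rfl
  | cons a t ih =>
    match t with
    | [] => rfl
    | c :: t =>
      have : (a :: c :: t).reverse = (c :: t).reverse ++ [a] := by simp
      rw [this]
      have h2 : (c :: t).reverse = t.reverse ++ [c] := by simp
      rw [h2]
      have h3 : t.reverse ++ [c] ++ [a] = t.reverse ++ c :: [a] := by simp
      rw [h3, sym2Edges_append t.reverse c [a], ← h2, ih]
      simp [Sym2.eq_swap]

lemma nodup_sym2Edges {l : List V} (h : l.Nodup) : (sym2Edges l).Nodup := by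
  induction l with
  | nil => exact List.nodup_nil
  | cons a t ih =>
    match t with
    | [] => exact List.nodup_nil
    | b :: t =>
      rw [sym2Edges_cons₂]
      refine List.nodup_cons.2 ⟨?_, ih h.of_cons⟩
      intro hmem
      exact (List.nodup_cons.1 h).1 (mem_of_mem_sym2Edges hmem (by simp))

lemma exists_edge_of_mem {l : List V} {v : V} (hv : v ∈ l) (hl : 2 ≤ l.length) :
    ∃ e ∈ sym2Edges l, v ∈ e := by
  induction l with
  | nil => simp at hv
  | cons a t ih =>
    match t with
    | [] => simp at hl
    | b :: t =>
      rcases List.mem_cons.1 hv with h | h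
      · exact ⟨s(a, b), by simp, by simp [h]⟩
      · match t with
        | [] =>
          simp only [List.mem_singleton] at h
          exact ⟨s(a, b), by simp, by simp [h]⟩
        | c :: t =>
          obtain ⟨e, he, hve⟩ := ih h (by simp)
          exact ⟨e, by rw [sym2Edges_cons₂]; exact List.mem_cons_of_mem _ he, hve⟩




lemma alt_congr {α : Type*} {P Q : α → Prop} : ∀ {l : List α},
    (∀ a ∈ l, (P a ↔ Q a)) → l.Chain' (fun a b => P a ↔ ¬ P b) →
    l.Chain' (fun a b => Q a ↔ ¬ Q b) := by
  intro l h hc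
  simp only [List.Chain', List.isChain_iff_getElem] at hc ⊢
  intro i hi
  have h1 := h _ (List.getElem_mem (l := l) (n := i) (by omega))
  have h2 := h _ (List.getElem_mem (l := l) (n := i+1) hi)
  have := hc i hi
  tauto

lemma matching_subset {Γ : SimpleGraph V} {M N : Finset (Sym2 V)}
    (h : IsGraphMatching Γ M) (hs : N ⊆ M) : IsGraphMatching Γ N :=
  ⟨fun e he => h.1 e (hs he), fun e he f hf => h.2 e (hs he) f (hs hf)⟩

lemma alt_reverse {F : Finset (Sym2 V)} {l : List V} (h : IsAlternating F l) :
    IsAlternating F l.reverse := by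
  unfold IsAlternating at *
  rw [sym2Edges_reverse, List.Chain', List.isChain_reverse]
  exact h.imp (fun {a b} hab => by tauto)

lemma aug_reverse {F : Finset (Sym2 V)} {l : List V} (h : IsAugmenting F l) :
    IsAugmenting F l.reverse := by
  obtain ⟨h1, h2, h3, h4⟩ := h
  refine ⟨by simpa using h1, alt_reverse h2, ?_, ?_⟩
  · rw [List.head?_reverse]; exact h4
  · rw [List.getLast?_reverse]; exact h3

lemma aug_cover {F : Finset (Sym2 V)} {l : List V} (haug : IsAugmenting F l)
    {v : V} (hv : v ∈ l) :
    (∃ f ∈ sym2Edges l, v ∈ f ∧ f ∉ F) ∧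
      ((∃ f ∈ sym2Edges l, v ∈ f ∧ f ∈ F) ∨ (∀ e ∈ F, v ∉ e)) := by
  obtain ⟨hlen, halt, hhead, hlast⟩ := haug
  obtain ⟨l₁, l₂, rfl⟩ := List.append_of_mem hv
  match l₁, l₂ with
  | [], l₂ =>
    have hfree := hhead v rfl
    match l₂ with
    | [] => simp at hlen
    | c :: l₂' =>
      exact ⟨⟨s(v, c), by simp, by simp, fun hin => hfree _ hin (by simp)⟩, Or.inr hfree⟩
  | a :: l₁', [] =>
    have hfree := hlast v List.getLast?_concat
    rcases List.eq_nil_or_concat (a :: l₁') with h | ⟨L, b, hL⟩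
    · simp at h
    · rw [List.concat_eq_append] at hL
      rw [hL]
      have he : sym2Edges (L ++ [b] ++ [v]) = sym2Edges (L ++ [b]) ++ [s(b, v)] := by
        have : L ++ [b] ++ [v] = L ++ b :: [v] := by simp
        rw [this, sym2Edges_append]; rfl
      refine ⟨⟨s(b, v), by rw [he]; simp, by simp, fun hin => hfree _ hin (by simp)⟩,
        Or.inr hfree⟩
  | a :: l₁', c :: l₂' =>
    rcases List.eq_nil_or_concat (a :: l₁') with h | ⟨L, b, hL⟩
    · simp at h
    · rw [List.concat_eq_append] at hL
      rw [hL] at halt ⊢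
      have hsplit : (L ++ [b]) ++ v :: c :: l₂' = L ++ b :: (v :: c :: l₂') := by simp
      rw [hsplit] at halt ⊢
      unfold IsAlternating at halt
      rw [sym2Edges_append] at halt ⊢
      have hchain := (List.isChain_append.1 halt).2.1
      rw [sym2Edges_cons₂, sym2Edges_cons₂, List.isChain_cons_cons] at hchain
      have hrel := hchain.1
      have m1 : s(b, v) ∈ sym2Edges (L ++ [b]) ++ s(b,v) :: s(v,c) :: sym2Edges (c :: l₂') := by
        simp
      have m2 : s(v, c) ∈ sym2Edges (L ++ [b]) ++ s(b,v) :: s(v,c) :: sym2Edges (c :: l₂') := by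
        simp
      by_cases hbv : s(b, v) ∈ F
      · exact ⟨⟨s(v, c), m2, by simp, hrel.1 hbv⟩, Or.inl ⟨s(b, v), m1, by simp, hbv⟩⟩
      · have : s(v, c) ∈ F := by tauto
        exact ⟨⟨s(b, v), m1, by simp, hbv⟩, Or.inl ⟨s(v, c), m2, by simp, this⟩⟩

lemma bool_alt_count : ∀ (l : List Bool) (x : Bool), l.Chain' (· ≠ ·) →
    l.head? = some x →
    l.count x = l.count (!x) + (if l.getLast? = some x then 1 else 0) := by
  intro l
  induction l with
  | nil => simp
  | cons a t ih =>
    intro x hc hh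
    simp only [List.head?_cons, Option.some_inj] at hh
    subst hh
    match t with
    | [] => simp
    | b :: t' =>
      rw [List.Chain', List.isChain_cons_cons] at hc
      have hb : b = !a := by
        cases a <;> cases b <;> simp_all
      have hIH := ih b hc.2 rfl
      subst hb
      rcases hgl : ((!a) :: t').getLast? with _ | c
      · simp [List.getLast?_eq_none_iff] at hgl
      · rw [hgl] at hIH
        have hlast : (a :: (!a) :: t').getLast? = some c := by
          rw [List.getLast?_cons_cons, hgl]
        rw [hlast]
        have c1 : (a :: (!a) :: t').count a = ((!a) :: t').count a + 1 := by
          simp [List.count_cons]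
        have c2 : (a :: (!a) :: t').count (!a) = ((!a) :: t').count (!a) := by
          simp [List.count_cons]
        rw [c1, c2]
        have hcount := hIH
        rw [Bool.not_not] at hcount
        cases a <;> cases c <;> simp_all


variable [DecidableEq V]

def coverF (e : Sym2 V) : Finset V :=
  Sym2.lift ⟨fun a b => {a, b}, fun a b => Finset.pair_comm a b⟩ e

@[simp] lemma mem_coverF {e : Sym2 V} {v : V} : v ∈ coverF e ↔ v ∈ e := by
  induction e using Sym2.ind with
  | _ a b => simp [coverF, Sym2.mem_iff]

lemma card_coverF {e : Sym2 V} (h : ¬ e.IsDiag) : (coverF e).card = 2 := by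
  induction e using Sym2.ind with
  | _ a b =>
    rw [Sym2.mk_isDiag_iff] at h
    simp only [coverF, Sym2.lift_mk]
    exact Finset.card_pair h

lemma card_le_of_covered {Γ : SimpleGraph V} {G H : Finset (Sym2 V)}
    (hG : IsGraphMatching Γ G) (hH : IsGraphMatching Γ H)
    (hcov : ∀ h ∈ H, ∀ v, v ∈ h → ∃ e ∈ G, v ∈ e) : H.card ≤ G.card := by
  have hbU : ∀ (M : Finset (Sym2 V)), IsGraphMatching Γ M →
      (M.biUnion coverF).card = 2 * M.card := by
    intro M hM
    rw [Finset.card_biUnion]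
    · rw [Finset.sum_congr rfl (fun e he => card_coverF
        (Γ.not_isDiag_of_mem_edgeSet (hM.1 e he)))]
      simp [Nat.mul_comm]
    · intro x hx y hy hxy
      rw [Function.onFun, Finset.disjoint_left]
      intro v hvx hvy
      exact hM.2 x hx y hy hxy v (mem_coverF.1 hvx) (mem_coverF.1 hvy)
  have hsub : H.biUnion coverF ⊆ G.biUnion coverF := by
    intro v hv
    obtain ⟨h, hh, hvh⟩ := Finset.mem_biUnion.1 hv
    obtain ⟨e, he, hve⟩ := hcov h hh v (mem_coverF.1 hvh)
    exact Finset.mem_biUnion.2 ⟨e, he, mem_coverF.2 hve⟩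
  have := Finset.card_le_card hsub
  rw [hbU H hH, hbU G hG] at this
  omega

lemma head_ne_last : ∀ (l : List V), l.Nodup → 2 ≤ l.length → ∀ u w,
    l.head? = some u → l.getLast? = some w → u ≠ w := by
  intro l hnd hlen u w hu hw
  match l with
  | a :: b :: t =>
    simp only [List.head?_cons, Option.some_inj] at hu
    rw [List.getLast?_cons_cons] at hw
    have hwmem : w ∈ b :: t := List.mem_of_mem_getLast? hw
    intro h
    subst hu h
    exact (List.nodup_cons.1 hnd).1 hwmem


lemma aug_transfer {F F' : Finset (Sym2 V)} {l : List V}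
    (hmemiff : ∀ f ∈ sym2Edges l, (f ∈ F ↔ f ∈ F'))
    (hhead : ∀ v, l.head? = some v → ∀ e ∈ F', v ∉ e)
    (hlast : ∀ v, l.getLast? = some v → ∀ e ∈ F', v ∉ e)
    (h : IsAugmenting F l) : IsAugmenting F' l :=
  ⟨h.1, alt_congr hmemiff h.2.1, hhead, hlast⟩

lemma exists_aug (Γ : SimpleGraph V) :
    ∀ (n : ℕ) (G H : Finset (Sym2 V)), G.card = n → IsGraphMatching Γ G →
    IsGraphMatching Γ H → (∀ e ∈ G, e ∉ H) → G.card < H.card →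
    ∃ l : List V, l.Nodup ∧ l.Chain' Γ.Adj ∧ (∀ e ∈ sym2Edges l, e ∈ H ∪ G) ∧
      IsAugmenting G l := by
  intro n
  induction n using Nat.strong_induction_on with
  | _ n IH =>
  intro G H hn hG hH hdisj hlt
  by_cases hcase : ∃ h ∈ H, ∃ x, x ∈ h ∧ ∀ e ∈ G, x ∉ e
  · obtain ⟨h, hhH, x, hxh, hxfree⟩ := hcase
    set y := Sym2.Mem.other hxh with hy
    have hs : s(x, y) = h := Sym2.other_spec hxh
    have hΓh : h ∈ Γ.edgeSet := hH.1 h hhH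
    have hxy : x ≠ y := by
      intro heq
      apply Γ.not_isDiag_of_mem_edgeSet hΓh
      rw [← hs, ← heq]
      exact Sym2.mk_isDiag_iff.2 rfl
    have hyh : y ∈ h := by rw [← hs]; simp
    have hAdjxy : Γ.Adj x y := by rw [← SimpleGraph.mem_edgeSet, hs]; exact hΓh
    by_cases hyfree : ∀ e ∈ G, y ∉ e
    · refine ⟨[x, y], by simp [hxy], by simp [List.Chain', hAdjxy], ?_, ?_⟩
      · intro f hf
        simp only [sym2Edges_cons₂, sym2Edges_single, List.mem_singleton] at hf
        rw [hf, hs]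
        exact Finset.mem_union_left _ hhH
      · refine ⟨by simp, ?_, ?_, ?_⟩
        · unfold IsAlternating
          simp [List.Chain']
        · intro v hv
          simp only [List.head?_cons, Option.some_inj] at hv
          subst hv
          exact hxfree
        · intro v hv
          simp only [List.getLast?_cons_cons, List.getLast?_singleton,
            Option.some_inj] at hv
          subst hv
          exact hyfree
    · push_neg at hyfree
      obtain ⟨e, heG, hye⟩ := hyfree
      set z := Sym2.Mem.other hye with hz
      have hez : s(y, z) = e := Sym2.other_spec hye
      have hΓe : e ∈ Γ.edgeSet := hG.1 e heG
      have hyz : y ≠ z := by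
        intro heq
        apply Γ.not_isDiag_of_mem_edgeSet hΓe
        rw [← hez, ← heq]
        exact Sym2.mk_isDiag_iff.2 rfl
      have hzez : z ∈ e := by rw [← hez]; simp
      have hAdjyz : Γ.Adj y z := by rw [← SimpleGraph.mem_edgeSet, hez]; exact hΓe
      have heyzG : s(y, z) ∈ G := by rw [hez]; exact heG
      have hGpos : 1 ≤ G.card := Finset.card_pos.2 ⟨e, heG⟩
      set G' := G.erase e with hG'def
      set H' := H.erase h with hH'def
      have hGc : G'.card = G.card - 1 := Finset.card_erase_of_mem heG
      have hHc : H'.card = H.card - 1 := Finset.card_erase_of_mem hhH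
      have hGsub : G' ⊆ G := Finset.erase_subset _ _
      have hHsub : H' ⊆ H := Finset.erase_subset _ _
      obtain ⟨P, hPnd, hPch, hPsub, hPaug⟩ :=
        IH (G.card - 1) (by omega) G' H' hGc
          (matching_subset hG hGsub) (matching_subset hH hHsub)
          (fun f hf hfH => hdisj f (hGsub hf) (hHsub hfH))
          (by omega)
      have hyP : y ∉ P := by
        intro hmem
        obtain ⟨⟨f, hf, hyf, hfG'⟩, -⟩ := aug_cover hPaug hmem
        have hfH' : f ∈ H' := by
          rcases Finset.mem_union.1 (hPsub f hf) with h1 | h1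
          · exact h1
          · exact absurd h1 hfG'
        have hfh : f ≠ h := by
          intro hfh
          rw [hfh, hH'def] at hfH'
          exact (Finset.mem_erase.1 hfH').1 rfl
        exact (hH.2 f (hHsub hfH') h hhH hfh y hyf) hyh
      have hxPmem : x ∉ P := by
        intro hmem
        obtain ⟨⟨f, hf, hxf, hfG'⟩, -⟩ := aug_cover hPaug hmem
        have hfH' : f ∈ H' := by
          rcases Finset.mem_union.1 (hPsub f hf) with h1 | h1
          · exact h1
          · exact absurd h1 hfG'
        have hfh : f ≠ h := by
          intro hfh
          rw [hfh, hH'def] at hfH'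
          exact (Finset.mem_erase.1 hfH').1 rfl
        exact (hH.2 f (hHsub hfH') h hhH hfh x hxf) hxh
      have hEndp : ∀ u, u ∈ P → (∀ e' ∈ G', u ∉ e') → (∀ e' ∈ G, u ∉ e') ∨ u = z := by
        intro u humem hufree'
        by_cases hc : ∀ e' ∈ G, u ∉ e'
        · exact Or.inl hc
        · push_neg at hc
          obtain ⟨e', he', hue'⟩ := hc
          have hee : e' = e := by
            by_contra hne
            exact hufree' e' (Finset.mem_erase.2 ⟨hne, he'⟩) hue'
          subst hee
          right
          rw [← hez] at hue'
          rcases Sym2.mem_iff.1 hue' with h1 | h1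
          · subst h1
            exact absurd humem hyP
          · exact h1
      have hiff : ∀ f ∈ sym2Edges P, (f ∈ G' ↔ f ∈ G) := by
        intro f hf
        constructor
        · exact fun hfG' => hGsub hfG'
        · intro hfG
          rcases Finset.mem_union.1 (hPsub f hf) with hh | hh
          · exact absurd (hHsub hh) (hdisj f hfG)
          · exact hh
      have hsubHG : ∀ f ∈ sym2Edges P, f ∈ H ∪ G := by
        intro f hf
        rcases Finset.mem_union.1 (hPsub f hf) with hh | hh
        · exact Finset.mem_union_left _ (hHsub hh)
        · exact Finset.mem_union_right _ (hGsub hh)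
      have hext : ∀ Q : List V, Q.Nodup → Q.Chain' Γ.Adj →
          (∀ f ∈ sym2Edges Q, f ∈ H' ∪ G') → IsAugmenting G' Q →
          Q.head? = some z →
          (∀ u, Q.getLast? = some u → ∀ e' ∈ G, u ∉ e') →
          x ∉ Q → y ∉ Q →
          ∃ l : List V, l.Nodup ∧ l.Chain' Γ.Adj ∧ (∀ f ∈ sym2Edges l, f ∈ H ∪ G) ∧
            IsAugmenting G l := by
        intro Q h1 h2 h3 h4 hhz h6 hxQ hyQ
        obtain ⟨hql, hqalt, hqhead, hqlast⟩ := h4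
        obtain ⟨a, c, t, rfl⟩ : ∃ a c t, Q = a :: c :: t := by
          match Q, hql with
          | a :: c :: t, _ => exact ⟨a, c, t, rfl⟩
        have haz : a = z := by simpa using hhz
        subst haz
        have hiffQ : ∀ f ∈ sym2Edges (z :: c :: t), (f ∈ G' ↔ f ∈ G) := by
          intro f hf
          constructor
          · exact fun hfG' => hGsub hfG'
          · intro hfG
            rcases Finset.mem_union.1 (h3 f hf) with hh | hh
            · exact absurd (hHsub hh) (hdisj f hfG)
            · exact hh
        have hzcH : s(z, c) ∉ G := by
          intro hmem
          have hin : s(z, c) ∈ sym2Edges (z :: c :: t) := by simp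
          have : s(z, c) ∈ G' := (hiffQ _ hin).2 hmem
          exact hqhead z rfl _ this (by simp)
        have hxyG : s(x, y) ∉ G := by
          rw [hs]
          intro hmem
          exact hdisj h hmem hhH
        refine ⟨x :: y :: z :: c :: t, ?_, ?_, ?_, ?_⟩
        · refine List.nodup_cons.2 ⟨?_, List.nodup_cons.2 ⟨hyQ, h1⟩⟩
          intro hm
          rcases List.mem_cons.1 hm with h' | h'
          · exact hxy h'
          · exact hxQ h'
        · exact List.isChain_cons_cons.2 ⟨hAdjxy, List.isChain_cons_cons.2 ⟨hAdjyz, h2⟩⟩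
        · intro f hf
          simp only [sym2Edges_cons₂, List.mem_cons] at hf
          rcases hf with h' | h' | h'
          · rw [h', hs]
            exact Finset.mem_union_left _ hhH
          · rw [h', hez]
            exact Finset.mem_union_right _ heG
          · have hfQ : f ∈ sym2Edges (z :: c :: t) := by
              rw [sym2Edges_cons₂]
              exact List.mem_cons.2 h'
            rcases Finset.mem_union.1 (h3 f hfQ) with hh | hh
            · exact Finset.mem_union_left _ (hHsub hh)
            · exact Finset.mem_union_right _ (hGsub hh)
        · refine ⟨by simp, ?_, ?_, ?_⟩
          · unfold IsAlternating
            simp only [sym2Edges_cons₂]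
            refine List.isChain_cons_cons.2 ⟨?_, List.isChain_cons_cons.2 ⟨?_, ?_⟩⟩
            · exact iff_of_false hxyG (not_not_intro heyzG)
            · exact iff_of_true heyzG hzcH
            · have := alt_congr hiffQ hqalt
              simpa [List.Chain'] using this
          · intro v hv
            simp only [List.head?_cons, Option.some_inj] at hv
            subst hv
            exact hxfree
          · intro v hv
            rw [List.getLast?_cons_cons, List.getLast?_cons_cons] at hv
            exact h6 v hv
      have hPlen := hPaug.1
      obtain ⟨u, hu⟩ : ∃ u, P.head? = some u := by
        match P, hPlen with
        | a :: t, _ => exact ⟨a, rfl⟩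
      obtain ⟨w, hw⟩ : ∃ w, P.getLast? = some w := by
        rcases hgl : P.getLast? with _ | w
        · rw [List.getLast?_eq_none_iff] at hgl
          subst hgl
          simp at hPlen
        · exact ⟨w, rfl⟩
      have hum : u ∈ P := List.mem_of_mem_head? hu
      have hwm : w ∈ P := List.mem_of_mem_getLast? hw
      have huval : ∀ v, P.head? = some v → v = u := fun v hv => by
        rw [hu] at hv; exact (Option.some_inj.1 hv).symm
      have hwval : ∀ v, P.getLast? = some v → v = w := fun v hv => by
        rw [hw] at hv; exact (Option.some_inj.1 hv).symm
      rcases hEndp u hum (fun e' he' => hPaug.2.2.1 u hu e' he') with hufree | huz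
      · rcases hEndp w hwm (fun e' he' => hPaug.2.2.2 w hw e' he') with hwfree | hwz
        · refine ⟨P, hPnd, hPch, hsubHG,
            aug_transfer hiff (fun v hv => (huval v hv) ▸ hufree)
              (fun v hv => (hwval v hv) ▸ hwfree) hPaug⟩
        · subst hwz
          refine hext P.reverse (List.nodup_reverse.2 hPnd)
            ((List.isChain_reverse).2 (hPch.imp fun _ _ hab => hab.symm)) ?_
            (aug_reverse hPaug) ?_ ?_ ?_ ?_
          · intro f hf
            rw [sym2Edges_reverse, List.mem_reverse] at hf
            exact hPsub f hf
          · rw [List.head?_reverse]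
            exact hw
          · intro v hv
            rw [List.getLast?_reverse] at hv
            exact (huval v hv) ▸ hufree
          · rw [List.mem_reverse]; exact hxPmem
          · rw [List.mem_reverse]; exact hyP
      · subst huz
        rcases hEndp w hwm (fun e' he' => hPaug.2.2.2 w hw e' he') with hwfree | hwz
        · exact hext P hPnd hPch hPsub hPaug hu
            (fun v hv => (hwval v hv) ▸ hwfree) hxPmem hyP
        · subst hwz
          exact absurd rfl (head_ne_last P hPnd hPlen _ _ hu hw)
  · push_neg at hcase
    have := card_le_of_covered hG hH (fun h hh v hv => hcase h hh v hv)
    omega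

lemma main_lemma (Γ : SimpleGraph V) :
    ∀ (q : ℕ) (G H : Finset (Sym2 V)), IsGraphMatching Γ G → IsGraphMatching Γ H →
    (∀ e ∈ G, e ∉ H) → H.card = G.card + q →
    ∃ p : Fin q → List V,
      (∀ i, (p i).Nodup ∧ (p i).Chain' Γ.Adj) ∧
      (∀ i, ∀ e ∈ sym2Edges (p i), e ∈ H ∪ G) ∧
      (∀ i j, i ≠ j → ∀ v ∈ p i, v ∉ p j) ∧
      (∀ i, IsAugmenting G (p i)) := by
  intro q
  induction q with
  | zero =>
    intro G H _ _ _ _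
    exact ⟨fun i => i.elim0, fun i => i.elim0, fun i => i.elim0,
      fun i j hij => i.elim0, fun i => i.elim0⟩
  | succ q IHq =>
    intro G H hG hH hdisj hq
    obtain ⟨P, hPnd, hPch, hPsub, hPaug⟩ :=
      exists_aug Γ G.card G H rfl hG hH hdisj (by omega)
    obtain ⟨a, b, t, rfl⟩ : ∃ a b t, P = a :: b :: t := by
      match P, hPaug.1 with
      | a :: b :: t, _ => exact ⟨a, b, t, rfl⟩
    set E := sym2Edges (a :: b :: t) with hE
    have hEnd : E.Nodup := nodup_sym2Edges hPnd
    have h0 : s(a, b) ∉ G := by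
      intro hm
      exact hPaug.2.2.1 a rfl _ hm (by simp)
    obtain ⟨w, c, t', hPrev⟩ : ∃ w c t', (a :: b :: t).reverse = w :: c :: t' := by
      rcases hr : (a :: b :: t).reverse with _ | ⟨w, t2⟩
      · have := congrArg List.length hr
        simp at this
      · rcases t2 with _ | ⟨c, t'⟩
        · have := congrArg List.length hr
          simp at this
        · exact ⟨w, c, t', rfl⟩
    have hlastedge : E.getLast? = some s(w, c) := by
      rw [hE, ← List.head?_reverse, ← sym2Edges_reverse, hPrev]
      simp
    have hwc : s(w, c) ∉ G := by
      have hrev := aug_reverse hPaug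
      intro hm
      exact hrev.2.2.1 w (by rw [hPrev]; rfl) _ hm (by simp)
    set bs := E.map (fun f => decide (f ∈ G)) with hbs
    have hchain : bs.Chain' (· ≠ ·) := by
      rw [hbs, List.Chain', List.isChain_map]
      refine hPaug.2.1.imp ?_
      intro f₁ f₂ hiff12
      by_cases h1 : f₁ ∈ G <;> by_cases h2 : f₂ ∈ G <;> simp_all
    have hh : bs.head? = some false := by
      rw [hbs, hE]
      simp [h0]
    have hl : bs.getLast? = some false := by
      rw [hbs, List.getLast?_map, hlastedge]
      simp [hwc]
    have hc := bool_alt_count bs false hchain hh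
    rw [hl] at hc
    simp at hc
    have hct : bs.count true = E.countP (fun f => decide (f ∈ G)) := by
      rw [hbs, List.count_eq_countP, List.countP_map]
      congr 1
      funext f
      simp
    have hcf : bs.count false = E.countP (fun f => !decide (f ∈ G)) := by
      rw [hbs, List.count_eq_countP, List.countP_map]
      congr 1
      funext f
      simp
    have hfG : (E.filter (fun f => decide (f ∈ G))).length = (G ∩ E.toFinset).card := by
      have hnd2 : (E.filter (fun f => decide (f ∈ G))).Nodup := hEnd.filter _
      rw [← List.toFinset_card_of_nodup hnd2, List.toFinset_filter]
      simp only [decide_eq_true_eq]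
      rw [Finset.filter_mem_eq_inter, Finset.inter_comm]
    have hfH : (E.filter (fun f => !decide (f ∈ G))).length = (H ∩ E.toFinset).card := by
      rw [List.filter_congr (q := fun f => decide (f ∈ H)) ?_]
      · have hnd2 : (E.filter (fun f => decide (f ∈ H))).Nodup := hEnd.filter _
        rw [← List.toFinset_card_of_nodup hnd2, List.toFinset_filter]
        simp only [decide_eq_true_eq]
        rw [Finset.filter_mem_eq_inter, Finset.inter_comm]
      · intro f hf
        have hfu := hPsub f hf
        rcases Finset.mem_union.1 hfu with h' | h'
        · have : f ∉ G := fun hfg => hdisj f hfg h'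
          simp [this, h']
        · have : f ∉ H := hdisj f h'
          simp [this, h']
    have hcards : (H ∩ E.toFinset).card = (G ∩ E.toFinset).card + 1 := by
      rw [← hfH, ← hfG, ← List.countP_eq_length_filter, ← List.countP_eq_length_filter,
        ← hct, ← hcf]
      exact hc
    set G' := G \ E.toFinset with hG'def
    set H' := H \ E.toFinset with hH'def
    have hGsplit := Finset.card_inter_add_card_sdiff G E.toFinset
    have hHsplit := Finset.card_inter_add_card_sdiff H E.toFinset
    rw [← hG'def] at hGsplit
    rw [← hH'def] at hHsplit
    have hGle : (G ∩ E.toFinset).card ≤ G.card := Finset.card_le_card Finset.inter_subset_left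
    have hq' : H'.card = G'.card + q := by omega
    have hGsub : G' ⊆ G := Finset.sdiff_subset
    have hHsub : H' ⊆ H := Finset.sdiff_subset
    obtain ⟨p', hp'1, hp'2, hp'3, hp'4⟩ :=
      IHq G' H' (matching_subset hG hGsub) (matching_subset hH hHsub)
        (fun f hf hfH => hdisj f (hGsub hf) (hHsub hfH)) hq'
    have hPdisj : ∀ i, ∀ v ∈ p' i, v ∉ (a :: b :: t) := by
      intro i v hv hvP
      obtain ⟨⟨f1, hf1, hvf1, hf1G⟩, -⟩ := aug_cover hPaug hvP
      obtain ⟨⟨f, hf, hvf, hfG'⟩, -⟩ := aug_cover (hp'4 i) hv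
      have hfH' : f ∈ H' := by
        rcases Finset.mem_union.1 (hp'2 i f hf) with h' | h'
        · exact h'
        · exact absurd h' hfG'
      have hf1H : f1 ∈ H := by
        rcases Finset.mem_union.1 (hPsub f1 hf1) with h' | h'
        · exact h'
        · exact absurd h' hf1G
      have hne : f ≠ f1 := by
        intro heq
        subst heq
        exact (Finset.mem_sdiff.1 hfH').2 (List.mem_toFinset.2 hf1)
      exact (hH.2 f (hHsub hfH') f1 hf1H hne v hvf) hvf1
    have hiff' : ∀ i, ∀ f ∈ sym2Edges (p' i), (f ∈ G' ↔ f ∈ G) := by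
      intro i f hf
      constructor
      · exact fun h' => hGsub h'
      · intro hfG
        rcases Finset.mem_union.1 (hp'2 i f hf) with h' | h'
        · exact absurd (hHsub h') (hdisj f hfG)
        · exact h'
    have hfree' : ∀ (i : Fin q) (v : V), v ∈ p' i →
        ((p' i).head? = some v ∨ (p' i).getLast? = some v) → ∀ e' ∈ G, v ∉ e' := by
      intro i v hvmem hv e' he' hve'
      by_cases h' : e' ∈ G'
      · rcases hv with hv | hv
        · exact (hp'4 i).2.2.1 v hv e' h' hve'
        · exact (hp'4 i).2.2.2 v hv e' h' hve'
      · have he'E : e' ∈ E.toFinset := by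
          by_contra hne
          exact h' (hG'def ▸ Finset.mem_sdiff.2 ⟨he', hne⟩)
        have hvP : v ∈ (a :: b :: t) :=
          mem_of_mem_sym2Edges (List.mem_toFinset.1 he'E) hve'
        exact hPdisj i v hvmem hvP
    refine ⟨Fin.cases (motive := fun _ => List V) (a :: b :: t) p', ?_, ?_, ?_, ?_⟩
    · intro i
      refine Fin.cases ?_ ?_ i
      · simpa only [Fin.cases_zero] using ⟨hPnd, hPch⟩
      · intro j
        simpa only [Fin.cases_succ] using hp'1 j
    · intro i
      refine Fin.cases ?_ ?_ i
      · simpa only [Fin.cases_zero] using hPsub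
      · intro j
        simp only [Fin.cases_succ]
        intro f hf
        rcases Finset.mem_union.1 (hp'2 j f hf) with h' | h'
        · exact Finset.mem_union_left _ (hHsub h')
        · exact Finset.mem_union_right _ (hGsub h')
    · intro i j
      refine Fin.cases ?_ ?_ i
      · refine Fin.cases ?_ ?_ j
        · intro h0j
          exact absurd rfl h0j
        · intro j' _
          simp only [Fin.cases_zero, Fin.cases_succ]
          intro v hv hv'
          exact hPdisj j' v hv' hv
      · intro i'
        refine Fin.cases ?_ ?_ j
        · intro _
          simp only [Fin.cases_zero, Fin.cases_succ]
          exact hPdisj i'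
        · intro j' hne
          simp only [Fin.cases_succ]
          exact hp'3 i' j' (fun heq => hne (by rw [heq]))
    · intro i
      refine Fin.cases ?_ ?_ i
      · simpa only [Fin.cases_zero] using hPaug
      · intro j
        simp only [Fin.cases_succ]
        refine aug_transfer (hiff' j) ?_ ?_ (hp'4 j)
        · intro v hv
          exact hfree' j v (List.mem_of_mem_head? hv) (Or.inl hv)
        · intro v hv
          exact hfree' j v (List.mem_of_mem_getLast? hv) (Or.inr hv)

end Aux

/-- If `G` and `H` are matchings in a simple graph with `|H| = |G| + q`, then `H ∪ G`
contains at least `q` pairwise vertex-disjoint augmenting `G`-alternating paths. -/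
theorem augmenting_paths_of_card_diff {V : Type*} [DecidableEq V] (Γ : SimpleGraph V)
    (G H : Finset (Sym2 V)) (hG : IsGraphMatching Γ G) (hH : IsGraphMatching Γ H)
    (q : ℕ) (hq : H.card = G.card + q) :
    ∃ p : Fin q → List V,
      (∀ i, (p i).Nodup ∧ (p i).Chain' Γ.Adj) ∧
      (∀ i, ∀ e ∈ sym2Edges (p i), e ∈ H ∪ G) ∧
      (∀ i j, i ≠ j → ∀ v ∈ p i, v ∉ p j) ∧
      (∀ i, IsAugmenting G (p i)) := by
  classical
  set G₀ := G \ H with hG₀def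
  set H₀ := H \ G with hH₀def
  have hGsplit := Finset.card_inter_add_card_sdiff G H
  have hHsplit := Finset.card_inter_add_card_sdiff H G
  rw [← hG₀def] at hGsplit
  rw [← hH₀def] at hHsplit
  have hcomm : (G ∩ H).card = (H ∩ G).card := by rw [Finset.inter_comm]
  have hq₀ : H₀.card = G₀.card + q := by omega
  have hG₀sub : G₀ ⊆ G := Finset.sdiff_subset
  have hH₀sub : H₀ ⊆ H := Finset.sdiff_subset
  obtain ⟨p, h1, h2, h3, h4⟩ :=
    Aux.main_lemma Γ q G₀ H₀ (Aux.matching_subset hG hG₀sub) (Aux.matching_subset hH hH₀sub)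
      (fun e he heH₀ => (Finset.mem_sdiff.1 he).2 (Finset.mem_sdiff.1 heH₀).1) hq₀
  have hfree : ∀ (i : Fin q) (v : V), v ∈ p i →
      ((p i).head? = some v ∨ (p i).getLast? = some v) → ∀ e ∈ G, v ∉ e := by
    intro i v hvmem hv e' he' hve'
    by_cases h' : e' ∈ G₀
    · rcases hv with hv | hv
      · exact (h4 i).2.2.1 v hv e' h' hve'
      · exact (h4 i).2.2.2 v hv e' h' hve'
    · have he'H : e' ∈ H := by
        by_contra hne
        exact h' (hG₀def ▸ Finset.mem_sdiff.2 ⟨he', hne⟩)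
      obtain ⟨⟨f, hf, hvf, hfG₀⟩, -⟩ := Aux.aug_cover (h4 i) hvmem
      have hfH₀ : f ∈ H₀ := by
        rcases Finset.mem_union.1 (h2 i f hf) with h'' | h''
        · exact h''
        · exact absurd h'' hfG₀
      have hne : f ≠ e' := by
        intro heq
        exact (Finset.mem_sdiff.1 hfH₀).2 (heq ▸ he')
      exact (hH.2 f (hH₀sub hfH₀) e' he'H hne v hvf) hve'
  refine ⟨p, h1, ?_, h3, ?_⟩
  · intro i f hf
    rcases Finset.mem_union.1 (h2 i f hf) with h' | h'
    · exact Finset.mem_union_left _ (hH₀sub h')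
    · exact Finset.mem_union_right _ (hG₀sub h')
  · intro i
    refine Aux.aug_transfer ?_ ?_ ?_ (h4 i)
    · intro f hf
      constructor
      · exact fun h' => hG₀sub h'
      · intro hfG
        rcases Finset.mem_union.1 (h2 i f hf) with h' | h'
        · exact absurd hfG (Finset.mem_sdiff.1 h').2
        · exact h'
    · intro v hv
      exact hfree i v (List.mem_of_mem_head? hv) (Or.inl hv)
    · intro v hv
      exact hfree i v (List.mem_of_mem_getLast? hv) (Or.inr hv)
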